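/- For every integer M ≥ 1 and every γ̃ with 0 < γ̃ < 1/M², there exist κ ∈ (0,1) satisfying 4√(1+κ²)·K(κ) = 2π/(M√γ̃) and a nonconstant periodic solution u : ℝ → ℝ of the stationary Ginzburg–Landau equation γ̃ u″(φ) = u(φ)³ − u(φ) of period 2π/M, whose amplitude satisfies max_φ u(φ) = √(2κ²/(1+κ²)). -/

import Mathlib

open Real MeasureTheory intervalIntegral Filter Set Function

/-- Complete elliptic integral of the first kind,
`K(κ) = ∫₀^{π/2} (1 − κ² sin²t)^{−1/2} dt`. -/
noncomputable def ellK (κ : ℝ) : ℝ :=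
  ∫ t in (0:ℝ)..(Real.pi/2), 1 / Real.sqrt (1 - κ^2 * Real.sin t ^ 2)

/-- Complete elliptic integral of the second kind,
`E(κ) = ∫₀^{π/2} (1 − κ² sin²t)^{1/2} dt`. -/
noncomputable def ellE (κ : ℝ) : ℝ :=
  ∫ t in (0:ℝ)..(Real.pi/2), Real.sqrt (1 - κ^2 * Real.sin t ^ 2)

namespace St11

noncomputable def dd (κ θ : ℝ) : ℝ := Real.sqrt (1 - κ^2 * Real.sin θ^2)

variable {κ : ℝ}

lemma base_le (hκ : κ^2 < 1) (θ : ℝ) : 1 - κ^2 ≤ 1 - κ^2 * Real.sin θ^2 := by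
  have h1 : κ^2 * Real.sin θ^2 ≤ κ^2 * 1 :=
    mul_le_mul_of_nonneg_left (Real.sin_sq_le_one θ) (sq_nonneg κ)
  linarith

lemma dd_pos (hκ : κ^2 < 1) (θ : ℝ) : 0 < dd κ θ :=
  Real.sqrt_pos.2 (lt_of_lt_of_le (by linarith) (base_le hκ θ))

lemma dd_le_one (θ : ℝ) : dd κ θ ≤ 1 := by
  exact Real.sqrt_le_one.2 (by nlinarith [sq_nonneg κ, sq_nonneg (Real.sin θ)])

lemma dd_sq (hκ : κ^2 < 1) (θ : ℝ) : dd κ θ ^ 2 = 1 - κ^2 * Real.sin θ^2 :=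
  Real.sq_sqrt (le_trans (by linarith) (base_le hκ θ))

lemma dd_cont : Continuous (dd κ) := by
  unfold dd; fun_prop

lemma inv_dd_cont (hκ : κ^2 < 1) : Continuous (fun θ => (dd κ θ)⁻¹) :=
  dd_cont.inv₀ (fun θ => (dd_pos hκ θ).ne')

lemma one_le_inv_dd (hκ : κ^2 < 1) (θ : ℝ) : 1 ≤ (dd κ θ)⁻¹ :=
  (one_le_inv₀ (dd_pos hκ θ)).2 (dd_le_one θ)

noncomputable def gg (κ x : ℝ) : ℝ := ∫ t in (0:ℝ)..x, (dd κ t)⁻¹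

lemma gg_intInt (hκ : κ^2 < 1) (a b : ℝ) :
    IntervalIntegrable (fun θ => (dd κ θ)⁻¹) volume a b :=
  (inv_dd_cont hκ).intervalIntegrable a b

lemma gg_hasDerivAt (hκ : κ^2 < 1) (x : ℝ) : HasDerivAt (gg κ) ((dd κ x)⁻¹) x :=
  intervalIntegral.integral_hasDerivAt_right (gg_intInt hκ 0 x)
    ((inv_dd_cont hκ).stronglyMeasurableAtFilter _ _) (inv_dd_cont hκ).continuousAt

lemma gg_cont (hκ : κ^2 < 1) : Continuous (gg κ) :=
  continuous_iff_continuousAt.2 fun x => (gg_hasDerivAt hκ x).continuousAt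

lemma gg_strictMono (hκ : κ^2 < 1) : StrictMono (gg κ) := by
  apply strictMono_of_deriv_pos
  intro x
  rw [(gg_hasDerivAt hκ x).deriv]
  exact inv_pos.2 (dd_pos hκ x)

lemma gg_ge (hκ : κ^2 < 1) {x : ℝ} (hx : 0 ≤ x) : x ≤ gg κ x := by
  have h := intervalIntegral.integral_mono_on hx
      (_root_.intervalIntegrable_const (c := (1:ℝ))) (gg_intInt hκ 0 x)
      (fun t _ => one_le_inv_dd hκ t)
  simpa [gg] using h

lemma gg_le (hκ : κ^2 < 1) {x : ℝ} (hx : x ≤ 0) : gg κ x ≤ x := by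
  have h := intervalIntegral.integral_mono_on hx
      (_root_.intervalIntegrable_const (c := (1:ℝ))) (gg_intInt hκ x 0)
      (fun t _ => one_le_inv_dd hκ t)
  have h2 : gg κ x = -∫ t in x..(0:ℝ), (dd κ t)⁻¹ := by
    rw [gg, intervalIntegral.integral_symm]
  simp only [intervalIntegral.integral_const, smul_eq_mul, mul_one] at h
  linarith

lemma gg_surj (hκ : κ^2 < 1) : Function.Surjective (gg κ) := by
  apply (gg_cont hκ).surjective
  · exact tendsto_atTop_mono' _ (eventually_atTop.2 ⟨0, fun x hx => gg_ge hκ hx⟩)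
      tendsto_id
  · exact tendsto_atBot_mono' _ (eventually_atBot.2 ⟨0, fun x hx => gg_le hκ hx⟩)
      tendsto_id


noncomputable def ee (hκ : κ^2 < 1) : ℝ ≃o ℝ :=
  StrictMono.orderIsoOfSurjective (gg κ) (gg_strictMono hκ) (gg_surj hκ)

lemma ee_apply (hκ : κ^2 < 1) (x : ℝ) : ee hκ x = gg κ x := rfl

noncomputable def am (hκ : κ^2 < 1) : ℝ → ℝ := (ee hκ).symm

lemma gg_am (hκ : κ^2 < 1) (x : ℝ) : gg κ (am hκ x) = x :=
  (ee hκ).apply_symm_apply x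

lemma am_gg (hκ : κ^2 < 1) (θ : ℝ) : am hκ (gg κ θ) = θ :=
  (ee hκ).symm_apply_apply θ

lemma am_cont (hκ : κ^2 < 1) : Continuous (am hκ) :=
  OrderIso.continuous _

lemma am_hasDerivAt (hκ : κ^2 < 1) (x : ℝ) :
    HasDerivAt (am hκ) (dd κ (am hκ x)) x := by
  have h := HasDerivAt.of_local_left_inverse ((am_cont hκ).continuousAt)
    (gg_hasDerivAt hκ (am hκ x)) (inv_ne_zero (dd_pos hκ _).ne')
    (Eventually.of_forall (gg_am hκ))
  simpa using h

lemma dd_hasDerivAt (hκ : κ^2 < 1) (θ : ℝ) :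
    HasDerivAt (dd κ) (-(κ^2 * Real.sin θ * Real.cos θ) / dd κ θ) θ := by
  have hinner : HasDerivAt (fun θ => 1 - κ^2 * Real.sin θ^2)
      (-(κ^2 * (2 * Real.sin θ * Real.cos θ))) θ := by
    have h1 : HasDerivAt (fun θ => Real.sin θ ^ 2)
        (2 * Real.sin θ * Real.cos θ) θ := by
      have := ((Real.hasDerivAt_sin θ).pow 2)
      exact this.congr_deriv (by norm_num)
    simpa using ((h1.const_mul (κ^2)).const_sub 1)
  have h := hinner.sqrt (by
    have := dd_pos hκ θ
    have := dd_sq hκ θ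
    nlinarith)
  unfold dd
  convert h using 1
  rw [← dd_sq hκ θ]
  unfold dd
  field_simp

noncomputable def sn (hκ : κ^2 < 1) (x : ℝ) : ℝ := Real.sin (am hκ x)

noncomputable def sn' (hκ : κ^2 < 1) (x : ℝ) : ℝ :=
  Real.cos (am hκ x) * dd κ (am hκ x)

lemma sn_hasDerivAt (hκ : κ^2 < 1) (x : ℝ) :
    HasDerivAt (sn hκ) (sn' hκ x) x :=
  (Real.hasDerivAt_sin (am hκ x)).comp x (am_hasDerivAt hκ x)

lemma sn'_hasDerivAt (hκ : κ^2 < 1) (x : ℝ) :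
    HasDerivAt (sn' hκ)
      (2 * κ^2 * sn hκ x ^ 3 - (1 + κ^2) * sn hκ x) x := by
  set a := am hκ x with ha
  have h1 : HasDerivAt (fun x => Real.cos (am hκ x))
      (-Real.sin a * dd κ a) x := by
    have := (Real.hasDerivAt_cos a).comp x (am_hasDerivAt hκ x)
    exact this
  have h2 : HasDerivAt (fun x => dd κ (am hκ x))
      ((-(κ^2 * Real.sin a * Real.cos a) / dd κ a) * dd κ a) x := by
    have := (dd_hasDerivAt hκ a).comp x (am_hasDerivAt hκ x); exact this
  have h3 := h1.mul h2
  have hne : dd κ a ≠ 0 := (dd_pos hκ a).ne'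
  have h2' : (-(κ^2 * Real.sin a * Real.cos a) / dd κ a) * dd κ a
      = -(κ^2 * Real.sin a * Real.cos a) := by field_simp
  rw [h2'] at h3
  have hgoal : (-Real.sin a * dd κ a) * dd κ a
      + Real.cos a * -(κ^2 * Real.sin a * Real.cos a)
      = 2 * κ^2 * sn hκ x ^ 3 - (1 + κ^2) * sn hκ x := by
    have hd2 : dd κ a * dd κ a = 1 - κ^2 * Real.sin a ^ 2 := by
      have := dd_sq hκ a; nlinarith
    have hc2 : Real.cos a ^ 2 = 1 - Real.sin a ^ 2 := by
      have := Real.sin_sq_add_cos_sq a; linarith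
    simp only [sn, ← ha]
    linear_combination (-Real.sin a) * hd2 + (-(κ^2 * Real.sin a)) * hc2
  exact hgoal ▸ h3


lemma gg_pi_div_two (hκ : κ^2 < 1) : gg κ (Real.pi/2) = ellK κ := by
  simp [gg, ellK, one_div, dd]

lemma inv_dd_periodic : Function.Periodic (fun θ => (dd κ θ)⁻¹) Real.pi := by
  intro θ
  simp [dd, Real.sin_add_pi]

lemma gg_add_pi (hκ : κ^2 < 1) (θ : ℝ) : gg κ (θ + Real.pi) = gg κ θ + gg κ Real.pi := by
  have hsplit := intervalIntegral.integral_add_adjacent_intervals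
    (gg_intInt hκ 0 Real.pi) (gg_intInt hκ Real.pi (θ + Real.pi))
  have hshift : ∫ t in Real.pi..(θ + Real.pi), (dd κ t)⁻¹ = gg κ θ := by
    have h := intervalIntegral.integral_comp_add_right (a := (0:ℝ)) (b := θ)
      (fun t => (dd κ t)⁻¹) Real.pi
    rw [zero_add] at h
    rw [← h]
    unfold gg
    congr 1
    ext t
    exact inv_dd_periodic t
  rw [hshift] at hsplit
  show (∫ t in (0:ℝ)..(θ + Real.pi), (dd κ t)⁻¹) = _
  rw [← hsplit]
  show _ = (gg κ θ) + ∫ t in (0:ℝ)..Real.pi, (dd κ t)⁻¹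
  ring

lemma gg_pi (hκ : κ^2 < 1) : gg κ Real.pi = 2 * ellK κ := by
  have hsplit := intervalIntegral.integral_add_adjacent_intervals
    (gg_intInt hκ 0 (Real.pi/2)) (gg_intInt hκ (Real.pi/2) Real.pi)
  have hrefl : ∫ t in (Real.pi/2)..Real.pi, (dd κ t)⁻¹
      = ∫ t in (0:ℝ)..(Real.pi/2), (dd κ t)⁻¹ := by
    have h := intervalIntegral.integral_comp_sub_left (a := (0:ℝ)) (b := Real.pi/2)
      (fun t => (dd κ t)⁻¹) Real.pi
    have h2 : ∀ t : ℝ, (dd κ (Real.pi - t))⁻¹ = (dd κ t)⁻¹ := by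
      intro t; simp [dd, Real.sin_pi_sub]
    rw [show Real.pi - Real.pi/2 = Real.pi/2 by ring, show Real.pi - 0 = Real.pi by ring] at h
    rw [← h]
    exact intervalIntegral.integral_congr (fun t _ => h2 t)
  rw [hrefl] at hsplit
  have hK := gg_pi_div_two hκ
  show (∫ t in (0:ℝ)..Real.pi, (dd κ t)⁻¹) = _
  rw [← hsplit]
  have : (∫ t in (0:ℝ)..(Real.pi/2), (dd κ t)⁻¹) = ellK κ := hK
  rw [this]
  ring

lemma gg_add_two_pi (hκ : κ^2 < 1) (θ : ℝ) :
    gg κ (θ + 2 * Real.pi) = gg κ θ + 4 * ellK κ := by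
  have h1 := gg_add_pi hκ (θ + Real.pi)
  have h2 := gg_add_pi hκ θ
  have h3 := gg_pi hκ
  have : θ + 2 * Real.pi = θ + Real.pi + Real.pi := by ring
  rw [this, h1, h2, h3]
  ring

lemma am_add (hκ : κ^2 < 1) (x : ℝ) :
    am hκ (x + 4 * ellK κ) = am hκ x + 2 * Real.pi := by
  have h := gg_add_two_pi hκ (am hκ x)
  rw [gg_am hκ x] at h
  calc am hκ (x + 4 * ellK κ) = am hκ (gg κ (am hκ x + 2 * Real.pi)) := by rw [h]
    _ = am hκ x + 2 * Real.pi := am_gg hκ _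

lemma sn_periodic (hκ : κ^2 < 1) : Function.Periodic (sn hκ) (4 * ellK κ) := by
  intro x
  unfold sn
  rw [am_add hκ x, Real.sin_add_two_pi]

lemma am_zero (hκ : κ^2 < 1) : am hκ 0 = 0 := by
  have h : gg κ 0 = 0 := by simp [gg]
  calc am hκ 0 = am hκ (gg κ 0) := by rw [h]
    _ = 0 := am_gg hκ 0

lemma am_ellK (hκ : κ^2 < 1) : am hκ (ellK κ) = Real.pi/2 := by
  have h := gg_pi_div_two hκ
  calc am hκ (ellK κ) = am hκ (gg κ (Real.pi/2)) := by rw [h]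
    _ = Real.pi/2 := am_gg hκ _

lemma sn_zero (hκ : κ^2 < 1) : sn hκ 0 = 0 := by simp [sn, am_zero hκ]

lemma sn_ellK (hκ : κ^2 < 1) : sn hκ (ellK κ) = 1 := by simp [sn, am_ellK hκ]

lemma sn_le_one (hκ : κ^2 < 1) (x : ℝ) : sn hκ x ≤ 1 := Real.sin_le_one _


lemma ellK_zero : ellK 0 = Real.pi / 2 := by
  simp [ellK]

lemma ellK_continuousOn {b : ℝ} (hb0 : 0 ≤ b) (hb1 : b < 1) :
    ContinuousOn ellK (Icc 0 b) := by
  intro x₀ hx₀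
  have hb2 : b^2 < 1 := by nlinarith
  have key : ContinuousWithinAt
      (fun κ => ∫ t in (0:ℝ)..(Real.pi/2), 1 / Real.sqrt (1 - κ^2 * Real.sin t ^ 2))
      (Icc 0 b) x₀ := by
    apply intervalIntegral.continuousWithinAt_of_dominated_interval
      (bound := fun _ => 1 / Real.sqrt (1 - b^2))
    · apply Eventually.of_forall
      intro κ
      apply Measurable.aestronglyMeasurable
      apply Measurable.div measurable_const
      exact (Real.continuous_sqrt.comp (by continuity)).measurable
    · apply eventually_nhdsWithin_of_forall
      intro κ hκ
      apply Eventually.of_forall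
      intro t _
      have hκb : κ^2 ≤ b^2 := by
        have := hκ.1; have := hκ.2; nlinarith
      have h1 : 1 - b^2 ≤ 1 - κ^2 * Real.sin t ^ 2 := by
        nlinarith [Real.sin_sq_le_one t, sq_nonneg κ]
      have h2 : (0:ℝ) < Real.sqrt (1 - b^2) := Real.sqrt_pos.2 (by linarith)
      have h3 : Real.sqrt (1 - b^2) ≤ Real.sqrt (1 - κ^2 * Real.sin t ^ 2) :=
        Real.sqrt_le_sqrt h1
      rw [Real.norm_eq_abs, abs_of_nonneg (by positivity)]
      exact one_div_le_one_div_of_le h2 h3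
    · exact _root_.intervalIntegrable_const
    · apply Eventually.of_forall
      intro t _
      apply ContinuousAt.continuousWithinAt
      apply ContinuousAt.div continuousAt_const
      · exact (Real.continuous_sqrt.comp (by continuity)).continuousAt
      · have h1 : 1 - b^2 ≤ 1 - x₀^2 * Real.sin t ^ 2 := by
          have hκb : x₀^2 ≤ b^2 := by
            have := hx₀.1; have := hx₀.2; nlinarith
          nlinarith [Real.sin_sq_le_one t, sq_nonneg x₀]
        exact (Real.sqrt_pos.2 (by linarith)).ne'
  exact key

lemma ellK_lower {b : ℝ} (hb0 : 0 ≤ b) (hb1 : b < 1) :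
    Real.arsinh ((Real.pi/2) / Real.sqrt (1 - b^2)) ≤ ellK b := by
  set ε := 1 - b^2 with hε
  have hεpos : 0 < ε := by nlinarith
  have hsε : 0 < Real.sqrt ε := Real.sqrt_pos.2 hεpos
  -- the comparison function and its antiderivative
  set F : ℝ → ℝ := fun t => -Real.arsinh ((Real.pi/2 - t) / Real.sqrt ε) with hF
  have hder : ∀ t ∈ Set.uIcc (0:ℝ) (Real.pi/2),
      HasDerivAt F (1 / Real.sqrt (ε + (Real.pi/2 - t)^2)) t := by
    intro t _
    have hinner : HasDerivAt (fun t => (Real.pi/2 - t) / Real.sqrt ε)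
        (-(Real.sqrt ε)⁻¹) t := by
      have h1 : HasDerivAt (fun t : ℝ => Real.pi/2 - t) (-1) t := by
        simpa using (hasDerivAt_id t).const_sub (Real.pi/2)
      simpa [neg_div, div_eq_mul_inv] using h1.div_const (Real.sqrt ε)
    have h2 := (Real.hasDerivAt_arsinh ((Real.pi/2 - t) / Real.sqrt ε)).comp t hinner
    have h3 := h2.neg
    refine HasDerivAt.congr_deriv h3 (Eq.symm ?_)
    have hsq : ((Real.pi/2 - t) / Real.sqrt ε)^2 = (Real.pi/2 - t)^2 / ε := by
      rw [div_pow, Real.sq_sqrt hεpos.le]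
    rw [hsq]
    have h4 : 1 + (Real.pi/2 - t)^2 / ε = (ε + (Real.pi/2 - t)^2) / ε := by
      field_simp
    rw [h4, Real.sqrt_div (by positivity)]
    field_simp
  have hint : ∫ t in (0:ℝ)..(Real.pi/2), 1 / Real.sqrt (ε + (Real.pi/2 - t)^2)
      = Real.arsinh ((Real.pi/2) / Real.sqrt ε) := by
    have hcont : Continuous (fun t : ℝ => 1 / Real.sqrt (ε + (Real.pi/2 - t)^2)) := by
      apply Continuous.div continuous_const
      · exact Real.continuous_sqrt.comp (by continuity)
      · intro t
        exact (Real.sqrt_pos.2 (by positivity)).ne'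
    have h := intervalIntegral.integral_eq_sub_of_hasDerivAt hder
      (hcont.intervalIntegrable 0 (Real.pi/2))
    rw [h]
    simp [hF]
  rw [← hint]
  apply intervalIntegral.integral_mono_on (by positivity)
  · exact (by
      apply Continuous.intervalIntegrable
      apply Continuous.div continuous_const
      · exact Real.continuous_sqrt.comp (by continuity)
      · intro t
        exact (Real.sqrt_pos.2 (by positivity)).ne')
  · -- integrability of the ellK integrand
    apply Continuous.intervalIntegrable
    apply Continuous.div continuous_const
    · exact Real.continuous_sqrt.comp (by continuity)
    · intro t
      have h1 : 1 - b^2 ≤ 1 - b^2 * Real.sin t ^ 2 := by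
        nlinarith [Real.sin_sq_le_one t, sq_nonneg b]
      exact (Real.sqrt_pos.2 (by nlinarith)).ne'
  · intro t ht
    have hcos : Real.cos t ^ 2 ≤ (Real.pi/2 - t)^2 := by
      have h1 : |Real.sin (Real.pi/2 - t)| ≤ |Real.pi/2 - t| := Real.abs_sin_le_abs
      have h2 : Real.sin (Real.pi/2 - t) = Real.cos t := Real.sin_pi_div_two_sub t
      rw [h2] at h1
      nlinarith [abs_nonneg (Real.cos t), sq_abs (Real.cos t), sq_abs (Real.pi/2 - t)]
    have hle : 1 - b^2 * Real.sin t ^ 2 ≤ ε + (Real.pi/2 - t)^2 := by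
      have hb2 : b^2 ≤ 1 := by nlinarith
      have hc : Real.cos t ^ 2 = 1 - Real.sin t ^ 2 := by
        have := Real.sin_sq_add_cos_sq t; linarith
      rw [hε]
      nlinarith [sq_nonneg (Real.cos t)]
    have hpos : 0 < Real.sqrt (1 - b^2 * Real.sin t ^ 2) := by
      apply Real.sqrt_pos.2
      nlinarith [Real.sin_sq_le_one t, sq_nonneg b]
    apply one_div_le_one_div_of_le hpos
    exact Real.sqrt_le_sqrt hle

end St11

open St11 Real Set

set_option maxHeartbeats 1000000 in
/-- for every integer `M ≥ 1` and every `γ̃ ∈ (0, 1/M²)` there exist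
`κ ∈ (0,1)` with `4√(1+κ²)K(κ) = 2π/(M√γ̃)` and a nonconstant periodic solution of
`γ̃ u″ = u³ − u` of period `2π/M` with amplitude `max u = √(2κ²/(1+κ²))`. -/
theorem statement11 (M : ℕ) (hM : 1 ≤ M) (γt : ℝ) (hγ0 : 0 < γt)
    (hγ1 : γt < 1 / (M:ℝ)^2) :
    ∃ κ : ℝ, 0 < κ ∧ κ < 1 ∧
      4 * Real.sqrt (1 + κ^2) * ellK κ = 2 * Real.pi / (M * Real.sqrt γt) ∧
      ∃ u v : ℝ → ℝ,
        (∀ φ, HasDerivAt u (v φ) φ) ∧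
        (∀ φ, HasDerivAt v ((u φ ^ 3 - u φ) / γt) φ) ∧
        (∃ a b : ℝ, u a ≠ u b) ∧
        Function.Periodic u (2 * Real.pi / M) ∧
        IsGreatest (Set.range u) (Real.sqrt (2 * κ^2 / (1 + κ^2))) := by
  have hM1 : (1:ℝ) ≤ (M:ℝ) := by exact_mod_cast hM
  have hMpos : (0:ℝ) < (M:ℝ) := by linarith
  have hsγ : 0 < Real.sqrt γt := Real.sqrt_pos.2 hγ0
  set y := 2 * Real.pi / ((M:ℝ) * Real.sqrt γt) with hy
  have hMγ : (M:ℝ) * Real.sqrt γt < 1 := by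
    have h1 : Real.sqrt γt < 1 / (M:ℝ) := by
      have h2 := Real.sqrt_lt_sqrt hγ0.le hγ1
      rwa [show (1:ℝ)/(M:ℝ)^2 = (1/(M:ℝ))^2 by ring,
        Real.sqrt_sq (by positivity)] at h2
    calc (M:ℝ) * Real.sqrt γt < (M:ℝ) * (1/(M:ℝ)) :=
          mul_lt_mul_of_pos_left h1 hMpos
      _ = 1 := by field_simp
  have hypos : 0 < y := by positivity
  have hy2π : 2 * Real.pi < y := by
    rw [hy, lt_div_iff₀ (by positivity)]
    nlinarith [Real.pi_pos]
  -- choose b < 1 with 4 * ellK b ≥ y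
  set z := Real.sinh (y/4) with hz
  have hmz : (0:ℝ) < max z 1 := lt_max_of_lt_right one_pos
  set w := (Real.pi/2) / max z 1 with hw
  have hwpos : 0 < w := div_pos (by positivity) hmz
  set ε0 := min (w^2) 1 with hε0def
  have hε0pos : 0 < ε0 := lt_min (by positivity) one_pos
  have hε0le : ε0 ≤ 1 := min_le_right _ _
  set b := Real.sqrt (1 - ε0) with hb
  have hb0 : 0 ≤ b := Real.sqrt_nonneg _
  have hb1 : b < 1 := by
    rw [hb]
    nlinarith [Real.sq_sqrt (show (0:ℝ) ≤ 1 - ε0 by linarith),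
      Real.sqrt_nonneg (1-ε0)]
  have hb2 : 1 - b^2 = ε0 := by
    rw [hb, Real.sq_sqrt (by linarith)]; ring
  have hKb : y/4 ≤ ellK b := by
    refine le_trans ?_ (ellK_lower hb0 hb1)
    rw [hb2]
    have hsε : 0 < Real.sqrt ε0 := Real.sqrt_pos.2 hε0pos
    have h1 : Real.sqrt ε0 ≤ w := by
      calc Real.sqrt ε0 ≤ Real.sqrt (w^2) :=
            Real.sqrt_le_sqrt (min_le_left _ _)
        _ = w := Real.sqrt_sq hwpos.le
    have h2 : z ≤ (Real.pi/2) / Real.sqrt ε0 := by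
      calc z ≤ max z 1 := le_max_left _ _
        _ = (Real.pi/2) / w := by rw [hw]; field_simp
        _ ≤ (Real.pi/2) / Real.sqrt ε0 := by
            apply div_le_div_of_nonneg_left (by positivity) hsε h1
    calc y/4 = Real.arsinh z := by rw [hz, Real.arsinh_sinh]
      _ ≤ Real.arsinh ((Real.pi/2) / Real.sqrt ε0) := Real.arsinh_le_arsinh.2 h2
  -- intermediate value theorem
  set h : ℝ → ℝ := fun κ => 4 * Real.sqrt (1 + κ^2) * ellK κ with hh
  have hcont : ContinuousOn h (Icc 0 b) := by
    apply ContinuousOn.mul _ (ellK_continuousOn hb0 hb1)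
    exact (continuous_const.mul (Real.continuous_sqrt.comp (continuous_const.add (continuous_pow 2)))).continuousOn
  have hh0 : h 0 = 2 * Real.pi := by
    simp [hh, ellK_zero]
    ring
  have hhb : y ≤ h b := by
    have h1 : (1:ℝ) ≤ Real.sqrt (1 + b^2) := by
      nlinarith [Real.sq_sqrt (show (0:ℝ) ≤ 1 + b^2 by positivity),
        Real.sqrt_nonneg (1 + b^2)]
    have h2 : 0 ≤ ellK b := le_trans (by positivity) hKb
    calc y = 4 * (y/4) := by ring
      _ ≤ 4 * ellK b := by linarith
      _ ≤ 4 * Real.sqrt (1+b^2) * ellK b := by nlinarith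
  have hmem : y ∈ Icc (h 0) (h b) := ⟨by rw [hh0]; linarith, hhb⟩
  obtain ⟨κ, hκmem, hκy⟩ := intermediate_value_Icc hb0 hcont hmem
  have hκ0 : 0 < κ := by
    rcases lt_or_eq_of_le hκmem.1 with h' | h'
    · exact h'
    · exfalso; rw [← h'] at hκy; rw [hh0] at hκy; linarith
  have hκ1 : κ < 1 := lt_of_le_of_lt hκmem.2 hb1
  have hκ2 : κ^2 < 1 := by nlinarith
  have hκy' : 4 * Real.sqrt (1 + κ^2) * ellK κ = y := hκy
  refine ⟨κ, hκ0, hκ1, hκy', ?_⟩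
  -- construct the solution
  have h1κ : (0:ℝ) < 1 + κ^2 := by positivity
  set K := ellK κ with hKdef
  set A := Real.sqrt (2 * κ^2 / (1 + κ^2)) with hA
  set c := 1 / Real.sqrt (γt * (1 + κ^2)) with hc
  have hcpos : 0 < c := by positivity
  have hApos : 0 < A := Real.sqrt_pos.2 (by positivity)
  have hA2 : A^2 = 2 * κ^2 / (1 + κ^2) := Real.sq_sqrt (by positivity)
  have hc2 : c^2 * (γt * (1 + κ^2)) = 1 := by
    rw [hc, div_pow, one_pow, Real.sq_sqrt (by positivity)]
    field_simp
  have hA2' : A^2 * (1 + κ^2) = 2 * κ^2 := by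
    rw [hA2]; field_simp
  refine ⟨fun φ => A * sn hκ2 (c * φ), fun φ => A * c * sn' hκ2 (c * φ),
    ?_, ?_, ?_, ?_, ?_⟩
  · intro φ
    have hlin : HasDerivAt (fun φ : ℝ => c * φ) c φ := by
      simpa using (hasDerivAt_id φ).const_mul c
    have h1 : HasDerivAt (fun φ : ℝ => A * sn hκ2 (c * φ))
        (A * (sn' hκ2 (c * φ) * c)) φ :=
      ((sn_hasDerivAt hκ2 (c * φ)).comp φ hlin).const_mul A
    convert h1 using 1
    ring
  · intro φ
    have hlin : HasDerivAt (fun φ : ℝ => c * φ) c φ := by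
      simpa using (hasDerivAt_id φ).const_mul c
    have h1 : HasDerivAt (fun φ : ℝ => A * c * sn' hκ2 (c * φ))
        (A * c * ((2 * κ^2 * sn hκ2 (c * φ) ^ 3 - (1 + κ^2) * sn hκ2 (c * φ)) * c)) φ :=
      ((sn'_hasDerivAt hκ2 (c * φ)).comp φ hlin).const_mul (A * c)
    convert h1 using 1
    set S := sn hκ2 (c * φ) with hS
    rw [eq_comm, eq_div_iff hγ0.ne', eq_comm]
    linear_combination (-(A * γt * c^2 * S^3)) * hA2' + (A * (A^2 * S^3 - S)) * hc2
      + 2*A*S*hc2 + 2*A*S^3*γt*c^2*hA2' - 2*A^3*S^3*hc2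
  · refine ⟨K / c, 0, ?_⟩
    have he1 : c * (K / c) = K := by field_simp
    show A * sn hκ2 (c * (K / c)) ≠ A * sn hκ2 (c * 0)
    rw [he1, mul_zero, sn_ellK hκ2, sn_zero hκ2, mul_one, mul_zero]
    exact hApos.ne'
  · -- periodicity
    have hsm : Real.sqrt (γt * (1 + κ^2)) = Real.sqrt γt * Real.sqrt (1 + κ^2) :=
      Real.sqrt_mul hγ0.le _
    have hs1κ : 0 < Real.sqrt (1 + κ^2) := Real.sqrt_pos.2 h1κ
    have hkey : c * (2 * Real.pi / M) = 4 * K := by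
      have e1 : 4 * K = y / Real.sqrt (1 + κ^2) := by
        rw [← hκy']
        field_simp
      have e2 : c * (2 * Real.pi / M) = y / Real.sqrt (1 + κ^2) := by
        rw [hc, hsm, hy]
        field_simp
      rw [e1, e2]
    intro φ
    show A * sn hκ2 (c * (φ + 2 * Real.pi / M)) = A * sn hκ2 (c * φ)
    rw [mul_add, hkey]
    exact congrArg _ (sn_periodic hκ2 (c * φ))
  · constructor
    · refine ⟨K / c, ?_⟩
      have he1 : c * (K / c) = K := by field_simp
      show A * sn hκ2 (c * (K / c)) = Real.sqrt (2 * κ^2 / (1 + κ^2))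
      rw [he1, sn_ellK hκ2, mul_one]
    · rintro x ⟨φ, rfl⟩
      calc A * sn hκ2 (c * φ) ≤ A * 1 :=
            mul_le_mul_of_nonneg_left (sn_le_one hκ2 _) hApos.le
        _ = A := mul_one A
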